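/- Any weakly preperiodic cellular automaton on A^ℤ is preperiodic: if for every configuration x there exist p ≥ 1 and q with F^{p+q}(x) = F^q(x), then there exist uniform P ≥ 1 and Q with F^{P+Q} = F^Q. -/

import Mathlib

open Set Filter Topology

/-- `F` commuting with the shift by `1` commutes with the shift by any `k : ℤ`. -/
private lemma shift_comm_aux {A : Type*} (F : (ℤ → A) → (ℤ → A))
    (hcomm : ∀ x : ℤ → A, F (fun i => x (i + 1)) = fun i => F x (i + 1)) :
    ∀ (k : ℤ) (x : ℤ → A), F (fun i => x (i + k)) = fun i => F x (i + k) := by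
  intro k
  induction k using Int.induction_on with
  | zero => simp
  | succ n ih =>
    intro x
    have e1 : (fun i => x (i + ((n : ℤ) + 1))) = (fun i => (fun j => x (j + (n : ℤ))) (i + 1)) := by
      funext i; congr 1; ring
    rw [e1, hcomm fun j => x (j + (n : ℤ)), ih]
    funext i; ring_nf
  | pred n ih =>
    intro x
    set y : ℤ → A := fun j => x (j + (-(n : ℤ) - 1)) with hy
    have e1 : (fun i => y (i + 1)) = (fun i => x (i + (-(n : ℤ)))) := by
      funext i; simp only [hy]; congr 1; ring
    have h2 : (fun i => F y (i + 1)) = fun i => F x (i + (-(n : ℤ))) := by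
      rw [← hcomm y, e1, ih]
    funext j
    have := congrFun h2 (j - 1)
    have e2 : j - 1 + 1 = j := by ring
    rw [e2] at this
    rw [this]
    congr 1; ring

/-- Iterates of `F` commute with every shift. -/
private lemma shift_comm_iter {A : Type*} (F : (ℤ → A) → (ℤ → A))
    (hcomm : ∀ x : ℤ → A, F (fun i => x (i + 1)) = fun i => F x (i + 1)) :
    ∀ (m : ℕ) (k : ℤ) (x : ℤ → A), F^[m] (fun i => x (i + k)) = fun i => F^[m] x (i + k) := by
  intro m
  induction m with
  | zero => intro k x; simp
  | succ m ih =>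
    intro k x
    rw [Function.iterate_succ_apply, Function.iterate_succ_apply,
      shift_comm_aux F hcomm k x, ih]

/-- Any weakly preperiodic cellular automaton on `A^ℤ` is preperiodic. -/
theorem stmt5 {A : Type*} [Fintype A] [Nonempty A] [TopologicalSpace A] [DiscreteTopology A]
    (F : (ℤ → A) → (ℤ → A)) (hF : Continuous F)
    (hcomm : ∀ x : ℤ → A, F (fun i => x (i + 1)) = fun i => F x (i + 1))
    (h : ∀ x : ℤ → A, ∃ p ≥ 1, ∃ q : ℕ, F^[p + q] x = F^[q] x) :
    ∃ P ≥ 1, ∃ Q : ℕ, F^[P + Q] = F^[Q] := by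
  classical
  set C : ℕ × ℕ → Set (ℤ → A) := fun pq => {x | F^[pq.1 + 1 + pq.2] x = F^[pq.2] x} with hC
  have hclosed : ∀ pq, IsClosed (C pq) := fun pq =>
    isClosed_eq (hF.iterate _) (hF.iterate _)
  have hcover : (⋃ pq, C pq) = univ := by
    ext x
    simp only [mem_iUnion, mem_univ, iff_true]
    obtain ⟨p, hp, q, hpq⟩ := h x
    refine ⟨(p - 1, q), ?_⟩
    simp only [hC, mem_setOf_eq]
    rwa [Nat.sub_add_cancel hp]
  obtain ⟨pq, x0, hx0⟩ := nonempty_interior_of_iUnion_of_closed hclosed hcover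
  have hnhds : C pq ∈ 𝓝 x0 := mem_interior_iff_mem_nhds.mp hx0
  rw [nhds_pi, Filter.mem_pi] at hnhds
  obtain ⟨I, hIfin, t, ht, hsub⟩ := hnhds
  have hcyl : ∀ y : ℤ → A, (∀ i ∈ I, y i = x0 i) → y ∈ C pq := by
    intro y hy
    apply hsub
    intro i hi
    rw [hy i hi]
    exact mem_of_mem_nhds (ht i)
  -- shift invariance of C pq
  have hshift : ∀ (k : ℤ) (y : ℤ → A), y ∈ C pq → (fun i => y (i + k)) ∈ C pq := by
    intro k y hyC
    simp only [hC, mem_setOf_eq] at hyC ⊢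
    rw [shift_comm_iter F hcomm _ k y, shift_comm_iter F hcomm _ k y, hyC]
  have hall : ∀ z : ℤ → A, z ∈ C pq := by
    intro z
    have hz : z ∈ closure (C pq) := by
      rw [mem_closure_iff_nhds]
      intro U hU
      rw [nhds_pi, Filter.mem_pi] at hU
      obtain ⟨J, hJfin, s, hs, hsubU⟩ := hU
      -- find k such that J + k misses I
      have hBfin : {k : ℤ | ∃ i ∈ J, i + k ∈ I}.Finite := by
        have hsubB : {k : ℤ | ∃ i ∈ J, i + k ∈ I} ⊆ ⋃ i ∈ J, ⋃ a ∈ I, {a - i} := by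
          rintro k ⟨i, hi, hik⟩
          refine mem_iUnion₂.mpr ⟨i, hi, mem_iUnion₂.mpr ⟨i + k, hik, ?_⟩⟩
          simp
        exact Set.Finite.subset (hJfin.biUnion fun i _ => hIfin.biUnion fun a _ =>
          finite_singleton _) hsubB
      obtain ⟨k, hk⟩ : ∃ k : ℤ, ∀ i ∈ J, i + k ∉ I := by
        obtain ⟨k, hk⟩ := hBfin.infinite_compl.nonempty
        exact ⟨k, fun i hi hik => hk ⟨i, hi, hik⟩⟩
      set y : ℤ → A := fun i => if i ∈ I then x0 i else z (i - k) with hy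
      have hyC : y ∈ C pq := hcyl y fun i hi => by simp [hy, hi]
      refine ⟨fun i => y (i + k), ?_, hshift k y hyC⟩
      apply hsubU
      intro i hi
      have hyz : y (i + k) = z i := by
        simp only [hy, hk i hi, if_false]
        congr 1; ring
      simpa [hyz] using mem_of_mem_nhds (hs i)
    rwa [(hclosed pq).closure_eq] at hz
  refine ⟨pq.1 + 1, by omega, pq.2, funext fun z => hall z⟩
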